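/- The map sending a pair (properly pointed synchronized interval I1, synchronized interval I2) to the synchronized interval [u·P1ℓ·d·P1r·P2, u·Q1·d·Q2] is a bijection onto the set of nonempty synchronized intervals. -/

import Mathlib

/-- A Dyck word: `true` is an up step `u`, `false` is a down step `d`. -/
def IsDyck (w : List Bool) : Prop :=
  w.count true = w.count false ∧ ∀ k, (w.take k).count false ≤ (w.take k).count true

/-- Position (0-based index) of the `i`-th (1-based) up step of `w`. -/
noncomputable def upPos (w : List Bool) (i : ℕ) : ℕ :=
  sInf {j | w.getD j false = true ∧ (w.take (j + 1)).count true = i}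

/-- Position of the down step matching the up step at position `k`:
the first later down step such that the letters strictly in between form a Dyck word. -/
noncomputable def matchIdx (w : List Bool) (k : ℕ) : ℕ :=
  sInf {m | k < m ∧ w.getD m true = false ∧ IsDyck ((w.drop (k + 1)).take (m - (k + 1)))}

/-- The distance function `D_w(i)`: number of letters between the `i`-th up step and its
matching down step, plus one. -/
noncomputable def distFn (w : List Bool) (i : ℕ) : ℕ :=
  matchIdx w (upPos w i) - upPos w i

/-- One rotation step of the Tamari order on Dyck words: a factor `d · B` (with `B` a
nonempty Dyck word) is replaced by `B · d`. -/
def TamariStep (P Q : List Bool) : Prop :=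
  ∃ A B C : List Bool, IsDyck B ∧ B ≠ [] ∧
    P = A ++ false :: (B ++ C) ∧ Q = A ++ (B ++ false :: C)

/-- The Tamari order on Dyck words: reflexive-transitive closure of rotation steps. -/
def TamariLe : List Bool → List Bool → Prop := Relation.ReflTransGen TamariStep
/-- The type of a Dyck word `w` of size `n`: the word of length `n - 1` over `{N, E}`
(encoded with `true = E`, `false = N`) whose `k`-th letter is `E` iff the letter following
the `k`-th up step of `w` is an up step. -/
noncomputable def typeWord (w : List Bool) : List Bool :=
  (List.range (w.count true - 1)).map (fun k => w.getD (upPos w (k + 1) + 1) false)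

/-- A synchronized interval: a pair of Dyck words of the same size, comparable in the
Tamari order, and with the same type. -/
def Sync (P Q : List Bool) : Prop :=
  IsDyck P ∧ IsDyck Q ∧ P.length = Q.length ∧ TamariLe P Q ∧ typeWord P = typeWord Q

/-- Data for a pair (properly pointed synchronized interval, synchronized interval):
`x = ((P1ℓ, P1r, Q1), (P2, Q2))`. -/
def PPSI (x : (List Bool × List Bool × List Bool) × (List Bool × List Bool)) : Prop :=
  IsDyck x.1.1 ∧ IsDyck x.1.2.1 ∧ (x.1.1 = [] → x.1.2.1 = []) ∧
    Sync (x.1.1 ++ x.1.2.1) x.1.2.2 ∧ Sync x.2.1 x.2.2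

/-- Lower path of the composed interval: `u·P1ℓ·d·P1r·P2`. -/
def glueP (x : (List Bool × List Bool × List Bool) × (List Bool × List Bool)) : List Bool :=
  true :: (x.1.1 ++ false :: (x.1.2.1 ++ x.2.1))

/-- Upper path of the composed interval: `u·Q1·d·Q2`. -/
def glueQ (x : (List Bool × List Bool × List Bool) × (List Bool × List Bool)) : List Bool :=
  true :: (x.1.2.2 ++ false :: x.2.2)

namespace Aux

abbrev ct (w : List Bool) : ℕ := w.count true
abbrev cf (w : List Bool) : ℕ := w.count false

lemma ctcf (w : List Bool) : ct w + cf w = w.length := by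
  induction w with
  | nil => rfl
  | cons a l ih =>
    cases a <;> simp only [ct, cf, List.count_cons, List.length_cons] at ih ⊢ <;> simp <;> omega

lemma dyck_len {w : List Bool} (h : IsDyck w) : ct w + ct w = w.length := by
  have h2 := ctcf w
  have h1 : ct w = cf w := h.1
  omega

lemma take_prefix_count (w : List Bool) {a b : ℕ} (hab : a ≤ b) (x : Bool) :
    (w.take a).count x ≤ (w.take b).count x := by
  have h1 : w.take a = (w.take b).take a := by rw [List.take_take, Nat.min_eq_left hab]
  rw [h1]
  exact ((List.take_sublist a _).count_le x)

lemma count_take_le (w : List Bool) (k : ℕ) (x : Bool) :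
    (w.take k).count x ≤ w.count x := ((List.take_sublist k w).count_le x)

lemma dyck_nil : IsDyck [] := ⟨rfl, fun k => by simp⟩

lemma dyck_append {A B : List Bool} (hA : IsDyck A) (hB : IsDyck B) : IsDyck (A ++ B) := by
  constructor
  · simp [List.count_append, hA.1, hB.1]
  · intro k
    rw [List.take_append, List.count_append, List.count_append]
    have h1 := hA.2 k
    have h2 := hB.2 (k - A.length)
    omega

lemma fcons_take (B : List Bool) (n : ℕ) (x : Bool) :
    ((false :: B).take n).count x
      = (if n = 0 then 0 else (B.take (n-1)).count x + (if x then 0 else 1)) := by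
  cases n with
  | zero => simp
  | succ m => cases x <;> simp [List.count_cons]

/-- counts of prefixes of a nested word -/
lemma nest_take_count {A B : List Bool} (j : ℕ) (x : Bool) :
    ((true :: (A ++ false :: B)).take (j+1)).count x
      = (if x then 1 else 0) + (A.take j).count x
        + (if j ≤ A.length then 0 else (B.take (j - A.length - 1)).count x + (if x then 0 else 1)) := by
  rw [List.take_succ_cons, List.count_cons, List.take_append, List.count_append,
    fcons_take]
  have : j - A.length = 0 ↔ j ≤ A.length := by omega
  cases x <;> simp [this] <;> by_cases h : j ≤ A.length <;> simp [h] <;> omega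

lemma dyck_nest {A B : List Bool} (hA : IsDyck A) (hB : IsDyck B) :
    IsDyck (true :: (A ++ false :: B)) := by
  constructor
  · simp [List.count_append, List.count_cons, hA.1, hB.1]
    omega
  · intro k
    cases k with
    | zero => simp
    | succ j =>
      rw [nest_take_count, nest_take_count]
      have h1 := hA.2 j
      have h2 := hB.2 (j - A.length - 1)
      by_cases h : j ≤ A.length <;> simp [h] <;> omega

lemma dyck_head {w : List Bool} (h : IsDyck w) (hne : w ≠ []) : ∃ t, w = true :: t := by
  cases w with
  | nil => exact absurd rfl hne
  | cons a t =>
    cases a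
    · have := h.2 1
      simp at this
    · exact ⟨t, rfl⟩

lemma take_count_split (w : List Bool) (m i : ℕ) (x : Bool) :
    (w.take (m + i)).count x = (w.take m).count x + (((w.drop m).take i)).count x := by
  rw [List.take_add, List.count_append]

lemma count_drop (w : List Bool) (m : ℕ) (x : Bool) :
    w.count x = (w.take m).count x + (w.drop m).count x := by
  conv_lhs => rw [← List.take_append_drop m w]
  rw [List.count_append]

lemma dyck_drop_of_take {w : List Bool} (h : IsDyck w) (m : ℕ)
    (hbal : (w.take m).count false = (w.take m).count true) : IsDyck (w.drop m) := by
  constructor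
  · have h1 := count_drop w m true
    have h2 := count_drop w m false
    have h3 := h.1
    omega
  · intro i
    have h1 := take_count_split w m i false
    have h2 := take_count_split w m i true
    have h3 := h.2 (m + i)
    have h4 : (w.drop m).take i = ((w.drop m).take i).take i := by simp [List.take_take]
    omega

lemma dyck_take_of_bal {w : List Bool} (h : IsDyck w) (m : ℕ)
    (hbal : (w.take m).count false = (w.take m).count true) : IsDyck (w.take m) := by
  refine ⟨hbal.symm, fun i => ?_⟩
  rw [List.take_take]
  exact h.2 _

/-- first-return decomposition -/
lemma dyck_decomp {P : List Bool} (h : IsDyck P) (hne : P ≠ []) :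
    ∃ A B, IsDyck A ∧ IsDyck B ∧ P = true :: (A ++ false :: B) := by
  obtain ⟨rest, hr⟩ := dyck_head h hne
  set S : Set ℕ := {j | 1 ≤ j ∧ (P.take j).count false = (P.take j).count true} with hS
  have hPlen : P.length ∈ S := by
    constructor
    · have : P.length ≠ 0 := by simpa using hne
      omega
    · simp [List.take_of_length_le (le_refl P.length), h.1.symm]
  have hSne : S.Nonempty := ⟨_, hPlen⟩
  set j := sInf S with hj
  have hjS : j ∈ S := Nat.sInf_mem hSne
  have hjle : j ≤ P.length := Nat.sInf_le hPlen
  have hmin : ∀ i, 1 ≤ i → i < j → (P.take i).count false < (P.take i).count true := by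
    intro i h1 h2
    have : i ∉ S := fun hi => absurd (Nat.sInf_le hi) (by omega)
    have h3 := h.2 i
    simp only [hS, Set.mem_setOf_eq] at this
    omega
  have hj2 : 2 ≤ j := by
    rcases Nat.lt_or_ge j 2 with h2 | h2
    · exfalso
      interval_cases j
      · exact absurd hjS (by simp [hS])
      · have := hjS.2
        rw [hr] at this
        simp [List.count_cons] at this
    · exact h2
  -- letter at j-1 is false
  have hjlt : j - 1 < P.length := by omega
  have hsplit : P.take j = P.take (j-1) ++ [P[j-1]] := by
    have hj1 : j = (j-1) + 1 := by omega
    conv_lhs => rw [hj1]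
    rw [List.take_succ]
    simp [List.getElem?_eq_getElem hjlt]
  have hletter : P[j-1] = false := by
    by_contra hb
    have hb' : P[j-1] = true := by revert hb; cases P[j-1] <;> simp
    have h1 := hjS.2
    rw [hsplit, hb'] at h1
    simp [List.count_append] at h1
    have h2 := hmin (j-1) (by omega) (by omega)
    omega
  have hA : ∀ i, i + 1 ≤ j - 1 → P.take (i+1) = true :: rest.take i := by
    intro i _
    rw [hr]
    simp
  refine ⟨rest.take (j - 2), P.drop j, ?_, ?_, ?_⟩
  · -- A Dyck
    constructor
    · have h1 := hjS.2
      rw [hsplit, hletter] at h1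
      simp only [List.count_append] at h1
      have h2 := hA (j-2) (by omega)
      have h3 : j - 2 + 1 = j - 1 := by omega
      rw [h3] at h2
      rw [h2] at h1
      simp [List.count_cons] at h1
      omega
    · intro i
      have hmm : (rest.take (j-2)).take i = rest.take (min i (j-2)) := by
        rw [List.take_take]
      rw [hmm]
      have h1 := hmin (min i (j-2) + 1) (by omega) (by omega)
      have h2 := hA (min i (j-2)) (by omega)
      rw [h2] at h1
      simp [List.count_cons] at h1
      omega
  · exact dyck_drop_of_take h j hjS.2
  · have h1 : P = P.take (j-1) ++ P[j-1] :: P.drop j := by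
      conv_lhs => rw [← List.take_append_drop (j-1) P]
      congr 1
      rw [List.drop_eq_getElem_cons hjlt]
      congr 2
      omega
    rw [hletter] at h1
    have h2 := hA (j-2) (by omega)
    have h3 : j - 2 + 1 = j - 1 := by omega
    rw [h3] at h2
    rw [h2] at h1
    simpa using h1

/-- uniqueness of the decomposition -/
lemma dyck_prefix_not_decomp {A a'' : List Bool} (hA : IsDyck A) (hA' : IsDyck (A ++ false :: a'')) : False := by
  have h2 := hA'.2 (A.length + 1)
  have h3 : (A ++ false :: a'').take (A.length + 1) = A ++ [false] := by
    rw [List.take_append]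
    simp
  rw [h3] at h2
  simp [List.count_append, hA.1] at h2

/-- uniqueness of the decomposition -/
lemma dyck_decomp_unique {A B A' B' : List Bool} (hA : IsDyck A) (hA' : IsDyck A')
    (heq : true :: (A ++ false :: B) = true :: (A' ++ false :: B')) : A = A' ∧ B = B' := by
  have h0 : A ++ false :: B = A' ++ false :: B' := by simpa using heq
  rcases List.append_eq_append_iff.1 h0 with ⟨a', ha1, ha2⟩ | ⟨a', ha1, ha2⟩
  · cases a' with
    | nil => simp at ha1 ha2; exact ⟨ha1.symm, by simpa using ha2⟩
    | cons x t =>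
      have hx : x = false := by
        have := ha2
        simp at this
        exact this.1
      exfalso
      subst hx
      rw [ha1] at hA'
      exact dyck_prefix_not_decomp hA hA'
  · cases a' with
    | nil => simp at ha1 ha2; exact ⟨ha1, by simp [ha2]⟩
    | cons x t =>
      have hx : x = false := by
        have := ha2
        simp at this
        exact this.1
      exfalso
      subst hx
      rw [ha1] at hA
      exact dyck_prefix_not_decomp hA' hA

lemma count_take_succ_le (w : List Bool) (n : ℕ) (x : Bool) :
    (w.take (n+1)).count x ≤ (w.take n).count x + 1 := by
  rw [List.take_succ, List.count_append]
  have : (w[n]?.toList).count x ≤ 1 := by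
    have h1 : (w[n]?.toList).count x ≤ (w[n]?.toList).length := List.count_le_length
    have h2 : (w[n]?.toList).length ≤ 1 := by cases w[n]? <;> simp
    omega
  omega

lemma ins_cf (l r : List Bool) (n : ℕ) :
    ((l ++ false :: r).take n).count false ≤ ((false :: (l ++ r)).take n).count false := by
  rw [List.take_append, List.count_append, fcons_take, fcons_take]
  by_cases h0 : n = 0
  · simp [h0]
  · simp only [h0, if_false]
    rw [List.take_append, List.count_append]
    by_cases h1 : n ≤ l.length
    · rw [if_pos (show n - l.length = 0 by omega)]
      have h3 := count_take_succ_le l (n-1) false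
      have h4 : n - 1 + 1 = n := by omega
      rw [h4] at h3
      simp only [if_false, Bool.false_eq_true, if_neg]
      omega
    · rw [if_neg (show ¬ (n - l.length = 0) by omega)]
      have h2 : l.take n = l := List.take_of_length_le (by omega)
      have h3 : l.take (n-1) = l := List.take_of_length_le (by omega)
      rw [h2, h3]
      have h4 : n - 1 - l.length = n - l.length - 1 := by omega
      rw [h4]
      simp only [if_false, Bool.false_eq_true, if_neg]
      omega

lemma step_counts {X Y : List Bool} (h : TamariStep X Y) :
    X.length = Y.length ∧ ct X = ct Y ∧ cf X = cf Y ∧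
      ∀ k, cf (Y.take k) ≤ cf (X.take k) ∧ ct (X.take k) ≤ ct (Y.take k) := by
  obtain ⟨A, B, C, hB, hBne, hX, hY⟩ := h
  subst hX hY
  refine ⟨by simp; omega, by simp [List.count_append, List.count_cons] <;> omega, 
    by simp [List.count_append, List.count_cons] <;> omega, fun k => ?_⟩
  have hcf : cf (((A ++ (B ++ false :: C))).take k) ≤ cf ((A ++ false :: (B ++ C)).take k) := by
    simp only [List.take_append, List.count_append, cf]
    have := ins_cf B C (k - A.length)
    simp only [List.take_append, List.count_append] at this
    omega
  refine ⟨hcf, ?_⟩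
  have l1 := ctcf ((A ++ false :: (B ++ C)).take k)
  have l2 := ctcf ((A ++ (B ++ false :: C)).take k)
  have hl1 := List.length_take (i := k) (l := A ++ false :: (B ++ C))
  have hl2 := List.length_take (i := k) (l := A ++ (B ++ false :: C))
  have hll : (A ++ false :: (B ++ C)).length = (A ++ (B ++ false :: C)).length := by
    simp; omega
  simp only [ct, cf] at *
  omega

lemma step_dyck {X Y : List Bool} (h : TamariStep X Y) (hX : IsDyck X) : IsDyck Y := by
  obtain ⟨hlen, hct, hcf, htake⟩ := step_counts h
  refine ⟨?_, fun k => ?_⟩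
  · have h1 := hX.1
    simp only [ct, cf] at *
    omega
  calc cf (Y.take k) ≤ cf (X.take k) := (htake k).1
    _ ≤ ct (X.take k) := hX.2 k
    _ ≤ ct (Y.take k) := (htake k).2

lemma le_counts {P Q : List Bool} (h : TamariLe P Q) :
    P.length = Q.length ∧ ct P = ct Q ∧ cf P = cf Q ∧
      ∀ k, cf (Q.take k) ≤ cf (P.take k) ∧ ct (P.take k) ≤ ct (Q.take k) := by
  induction h with
  | refl => exact ⟨rfl, rfl, rfl, fun k => ⟨le_refl _, le_refl _⟩⟩
  | tail hab hbc ih =>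
    obtain ⟨h1, h2, h3, h4⟩ := ih
    obtain ⟨g1, g2, g3, g4⟩ := step_counts hbc
    exact ⟨h1.trans g1, h2.trans g2, h3.trans g3,
      fun k => ⟨(g4 k).1.trans (h4 k).1, (h4 k).2.trans (g4 k).2⟩⟩

lemma le_dyck {P Q : List Bool} (h : TamariLe P Q) (hP : IsDyck P) : IsDyck Q := by
  induction h with
  | refl => exact hP
  | tail _ hbc ih => exact step_dyck hbc ih

lemma step_context {X Y : List Bool} (L R : List Bool) (h : TamariStep X Y) :
    TamariStep (L ++ X ++ R) (L ++ Y ++ R) := by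
  obtain ⟨A, B, C, hB, hBne, hX, hY⟩ := h
  exact ⟨L ++ A, B, C ++ R, hB, hBne, by simp [hX], by simp [hY]⟩

lemma le_context {X Y : List Bool} (L R : List Bool) (h : TamariLe X Y) :
    TamariLe (L ++ X ++ R) (L ++ Y ++ R) :=
  Relation.ReflTransGen.lift (fun w => L ++ w ++ R) (fun _ _ hab => step_context L R hab) _ _ h

noncomputable def fullType (w : List Bool) : List Bool :=
  (List.range (w.count true)).map (fun k => w.getD (upPos w (k + 1) + 1) false)

lemma getD_true_lt {w : List Bool} {j : ℕ} (h : w.getD j false = true) : j < w.length := by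
  by_contra hc
  rw [List.getD_eq_default _ _ (by omega)] at h
  exact absurd h (by simp)

lemma take_succ_of_true {w : List Bool} {j : ℕ} (h : w.getD j false = true) :
    w.take (j+1) = w.take j ++ [true] := by
  have hj := getD_true_lt h
  rw [List.take_succ]
  congr 1
  rw [List.getElem?_eq_getElem hj]
  have : w[j] = true := by
    have := List.getD_eq_getElem w false hj
    rw [h] at this
    exact this.symm
  rw [this]
  rfl

lemma ct_take_succ_of_true {w : List Bool} {j : ℕ} (h : w.getD j false = true) :
    (w.take (j+1)).count true = (w.take j).count true + 1 := by
  rw [take_succ_of_true h, List.count_append]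
  simp

lemma cf_take_succ_of_true {w : List Bool} {j : ℕ} (h : w.getD j false = true) :
    (w.take (j+1)).count false = (w.take j).count false := by
  rw [take_succ_of_true h, List.count_append]
  simp

lemma upPos_unique {w : List Bool} {i j j' : ℕ}
    (hj : w.getD j false = true ∧ (w.take (j+1)).count true = i)
    (hj' : w.getD j' false = true ∧ (w.take (j'+1)).count true = i) : j = j' := by
  rcases Nat.lt_trichotomy j j' with h | h | h
  · exfalso
    have h1 := ct_take_succ_of_true hj'.1
    have h2 : (w.take (j+1)).count true ≤ (w.take j').count true :=
      take_prefix_count w (by omega) true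
    omega
  · exact h
  · exfalso
    have h1 := ct_take_succ_of_true hj.1
    have h2 : (w.take (j'+1)).count true ≤ (w.take j).count true :=
      take_prefix_count w (by omega) true
    omega

lemma upPos_eq {w : List Bool} {i j : ℕ} (hj1 : w.getD j false = true)
    (hj2 : (w.take (j+1)).count true = i) : upPos w i = j := by
  have hne : {j | w.getD j false = true ∧ (w.take (j + 1)).count true = i}.Nonempty :=
    ⟨j, hj1, hj2⟩
  have hmem := Nat.sInf_mem hne
  exact upPos_unique hmem ⟨hj1, hj2⟩

lemma upPos_exists {w : List Bool} {i : ℕ} (h1 : 1 ≤ i) (h2 : i ≤ ct w) :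
    ∃ j, w.getD j false = true ∧ (w.take (j+1)).count true = i := by
  induction w generalizing i with
  | nil => simp [ct] at h2; omega
  | cons a l ih =>
    cases a with
    | false =>
      have h2' : i ≤ ct l := by simpa [ct, List.count_cons] using h2
      obtain ⟨j, hj1, hj2⟩ := ih h1 h2'
      exact ⟨j+1, by simpa using hj1, by simpa [List.count_cons] using hj2⟩
    | true =>
      rcases Nat.eq_or_lt_of_le h1 with h | h
      · exact ⟨0, by simp, by simp [← h]⟩
      · have h2' : i - 1 ≤ List.count true l := by
          simp [ct, List.count_cons] at h2
          omega
        obtain ⟨j, hj1, hj2⟩ := ih (by omega) h2'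
        refine ⟨j+1, by simpa using hj1, ?_⟩
        simp [List.count_cons, hj2]
        omega

lemma upPos_spec {w : List Bool} {i : ℕ} (h1 : 1 ≤ i) (h2 : i ≤ ct w) :
    w.getD (upPos w i) false = true ∧ (w.take (upPos w i + 1)).count true = i := by
  obtain ⟨j, hj1, hj2⟩ := upPos_exists h1 h2
  rw [upPos_eq hj1 hj2]
  exact ⟨hj1, hj2⟩

lemma pos_after_true_lt {w : List Bool} {j : ℕ} (hw : IsDyck w) (h : w.getD j false = true) :
    j + 1 < w.length := by
  have hj := getD_true_lt h
  rcases Nat.lt_or_ge (j+1) w.length with h1 | h1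
  · exact h1
  · exfalso
    have hw1 : w.take (j+1) = w := List.take_of_length_le h1
    have h2 := ct_take_succ_of_true h
    have h3 := cf_take_succ_of_true h
    rw [hw1] at h2 h3
    have h4 := hw.2 j
    have h5 := hw.1
    omega

lemma upPos_append_left {X Y : List Bool} {i : ℕ} (h1 : 1 ≤ i) (h2 : i ≤ ct X) :
    upPos (X ++ Y) i = upPos X i := by
  obtain ⟨g1, g2⟩ := upPos_spec h1 h2
  have hlt := getD_true_lt g1
  apply upPos_eq
  · rw [List.getD_append _ _ _ _ hlt]
    exact g1
  · rw [List.take_append]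
    have : upPos X i + 1 - X.length = 0 := by omega
    rw [this]
    simpa using g2

lemma upPos_append_right {X Y : List Bool} {i : ℕ} (h1 : ct X < i) (h2 : i ≤ ct X + ct Y) :
    upPos (X ++ Y) i = X.length + upPos Y (i - ct X) := by
  obtain ⟨g1, g2⟩ := upPos_spec (i := i - ct X) (w := Y) (by omega) (by omega)
  apply upPos_eq
  · rw [List.getD_append_right _ _ _ _ (by omega)]
    have : X.length + upPos Y (i - ct X) - X.length = upPos Y (i - ct X) := by omega
    rw [this]
    exact g1
  · have hh : X.length + upPos Y (i - ct X) + 1 = X.length + (upPos Y (i - ct X) + 1) := by omega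
    rw [hh, List.take_length_add_append, List.count_append, g2]
    simp only [ct] at h1 h2 ⊢
    omega

lemma length_fullType (w : List Bool) : (fullType w).length = ct w := by
  simp [fullType]

lemma fullType_eq_typeWord {w : List Bool} (h : 1 ≤ ct w) :
    fullType w = typeWord w ++ [false] := by
  have hr : List.count true w = (List.count true w - 1) + 1 := by
    simp only [ct] at h; omega
  rw [fullType, typeWord]
  conv_lhs => rw [hr]
  rw [List.range_succ, List.map_append]
  congr 1
  simp only [List.map_cons, List.map_nil]
  congr 1
  have h1 : List.count true w - 1 + 1 = List.count true w := by
    simp only [ct] at h; omega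
  rw [h1]
  by_contra hc
  have hc' : w.getD (upPos w (ct w) + 1) false = true := by
    revert hc; cases w.getD (upPos w (ct w) + 1) false <;> simp
  obtain ⟨g1, g2⟩ := upPos_spec (i := ct w) (w := w) h (le_refl _)
  have h2 := ct_take_succ_of_true hc'
  have h3 : (w.take (upPos w (ct w) + 1)).count true ≤ (w.take (upPos w (ct w) + 1)).count true := le_refl _
  have h4 : (w.take (upPos w (ct w) + 1)).count true ≤ (w.take (upPos w (ct w) + 1 + 1 - 1)).count true :=
    take_prefix_count w (by omega) true
  have h5 := count_take_le w (upPos w (ct w) + 1 + 1) true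
  simp only [ct] at *
  omega

lemma fullType_append {X Y : List Bool} (hX : IsDyck X) :
    fullType (X ++ Y) = fullType X ++ fullType Y := by
  have hct : List.count true (X ++ Y) = List.count true X + List.count true Y := by
    simp [List.count_append]
  rw [fullType, fullType, fullType, hct, List.range_add, List.map_append, List.map_map]
  congr 1
  · apply List.map_congr_left
    intro k hk
    rw [List.mem_range] at hk
    have hk' : k < ct X := hk
    have h1 : 1 ≤ k + 1 := by omega
    have h2 : k + 1 ≤ ct X := by omega
    rw [upPos_append_left h1 h2]
    obtain ⟨g1, _⟩ := upPos_spec h1 h2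
    have h3 := pos_after_true_lt hX g1
    rw [List.getD_append _ _ _ _ h3]
  · apply List.map_congr_left
    intro k hk
    rw [List.mem_range] at hk
    simp only [Function.comp]
    have hk' : k < ct Y := hk
    have h1 : ct X < ct X + k + 1 := by omega
    have h2 : ct X + k + 1 ≤ ct X + ct Y := by omega
    have h3 : ct X + k + 1 - ct X = k + 1 := by omega
    have h4 : upPos (X ++ Y) (List.count true X + k + 1) = X.length + upPos Y (k+1) := by
      have := upPos_append_right h1 h2
      rw [h3] at this
      rw [show List.count true X + k + 1 = ct X + k + 1 from rfl]
      exact this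
    rw [h4, List.getD_append_right _ _ _ _ (by omega)]
    congr 1
    omega

lemma fullType_cons_false (B : List Bool) : fullType (false :: B) = fullType B := by
  have hct : List.count true (false :: B) = List.count true B := by simp [List.count_cons]
  rw [fullType, fullType, hct]
  apply List.map_congr_left
  intro k hk
  rw [List.mem_range] at hk
  have hk' : k < ct B := hk
  have hup : upPos (false :: B) (k+1) = upPos B (k+1) + 1 := by
    obtain ⟨g1, g2⟩ := upPos_spec (w := B) (i := k+1) (by omega) (by omega)
    apply upPos_eq
    · simpa using g1
    · simpa [List.count_cons] using g2
  rw [hup]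
  rfl

lemma fullType_cons_true (M : List Bool) :
    fullType (true :: M) = M.getD 0 false :: fullType M := by
  have hct : List.count true (true :: M) = 1 + List.count true M := by
    simp [List.count_cons]; omega
  rw [fullType, fullType, hct, List.range_add, List.map_append, List.map_map]
  have hr1 : List.range 1 = [0] := rfl
  rw [hr1]
  simp only [List.map_cons, List.map_nil, List.singleton_append]
  congr 1
  · have h0 : upPos (true :: M) 1 = 0 := upPos_eq (by simp) (by simp)
    rw [h0]
    rfl
  · apply List.map_congr_left
    intro k hk
    rw [List.mem_range] at hk
    have hk' : k < ct M := hk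
    simp only [Function.comp]
    have hup : upPos (true :: M) (1 + k + 1) = upPos M (k+1) + 1 := by
      obtain ⟨g1, g2⟩ := upPos_spec (w := M) (i := k+1) (by omega) (by omega)
      apply upPos_eq
      · simpa using g1
      · simp [List.count_cons, g2]
        omega
    rw [hup]
    rfl

lemma dyck_getD0 {L : List Bool} (h : IsDyck L) (hne : L ≠ []) : L.getD 0 false = true := by
  obtain ⟨t, ht⟩ := dyck_head h hne
  rw [ht]
  rfl

lemma ct_eq_of_dyck_len {U V : List Bool} (hU : IsDyck U) (hV : IsDyck V)
    (hlen : U.length = V.length) : ct U = ct V := by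
  have h1 := dyck_len hU
  have h2 := dyck_len hV
  omega

lemma typeWord_iff_fullType {U V : List Bool} (hU : IsDyck U) (hV : IsDyck V)
    (hlen : U.length = V.length) : typeWord U = typeWord V ↔ fullType U = fullType V := by
  have hct := ct_eq_of_dyck_len hU hV hlen
  rcases Nat.eq_zero_or_pos (ct U) with h | h
  · have hV0 : ct V = 0 := by omega
    simp only [ct] at h hV0
    simp [typeWord, fullType, h, hV0]
  · rw [fullType_eq_typeWord h, fullType_eq_typeWord (by omega)]
    constructor
    · intro he; rw [he]
    · intro he
      exact (List.append_left_inj _).mp he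

lemma nest_balance {A B : List Bool} (hA : IsDyck A) :
    ((true :: (A ++ false :: B)).take (A.length + 2)).count false
      = ((true :: (A ++ false :: B)).take (A.length + 2)).count true := by
  have h1 := nest_take_count (A := A) (B := B) (A.length + 1) false
  have h2 := nest_take_count (A := A) (B := B) (A.length + 1) true
  have e : A.length + 1 + 1 = A.length + 2 := by omega
  rw [e] at h1 h2
  rw [h1, h2]
  rw [if_neg (show ¬ (A.length + 1 ≤ A.length) by omega),
    List.take_of_length_le (show A.length ≤ A.length + 1 by omega)]
  simp
  have := hA.1
  omega

lemma nest_strict {A B : List Bool} (hA : IsDyck A) {j : ℕ} (h1 : 1 ≤ j) (h2 : j ≤ A.length + 1) :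
    ((true :: (A ++ false :: B)).take j).count false
      < ((true :: (A ++ false :: B)).take j).count true := by
  obtain ⟨j', rfl⟩ : ∃ j', j = j' + 1 := ⟨j - 1, by omega⟩
  rw [nest_take_count, nest_take_count]
  have h3 : j' ≤ A.length := by omega
  simp [h3]
  have := hA.2 j'
  omega

lemma nest_drop (A B : List Bool) : (true :: (A ++ false :: B)).drop (A.length + 2) = B := by
  have : A.length + 2 = (A.length + 1) + 1 := by omega
  rw [this, List.drop_succ_cons, List.drop_append]
  simp

lemma nest_tail_dyck {A B : List Bool} (hA : IsDyck A)
    (hP : IsDyck (true :: (A ++ false :: B))) : IsDyck B := by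
  have := dyck_drop_of_take hP (A.length + 2) (nest_balance hA)
  rwa [nest_drop] at this

lemma split_lemma {A B C D : List Bool} (hA : IsDyck A) (hC : IsDyck C)
    (hP : IsDyck (true :: (A ++ false :: B)))
    (hle : TamariLe (true :: (A ++ false :: B)) (true :: (C ++ false :: D))) :
    A.length ≤ C.length ∧ C.length - A.length ≤ B.length ∧
      IsDyck (B.take (C.length - A.length)) ∧ IsDyck (B.drop (C.length - A.length)) ∧
      B.length - (C.length - A.length) = D.length := by
  obtain ⟨hlen, hct, hcf, htake⟩ := le_counts hle
  simp only [List.length_cons, List.length_append] at hlen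
  have hAC : A.length ≤ C.length := by
    by_contra hc
    have h1 := nest_balance (B := D) hC
    have h2 := nest_strict (B := B) hA (j := C.length + 2) (by omega) (by omega)
    have h3 := (htake (C.length + 2)).1
    have h4 := (htake (C.length + 2)).2
    simp only [ct, cf] at *
    omega
  set m := C.length - A.length with hm
  have hmB : m ≤ B.length := by omega
  have hB : IsDyck B := nest_tail_dyck hA hP
  -- balance of B.take m
  have hbal : (B.take m).count false = (B.take m).count true := by
    have h1 := nest_take_count (A := A) (B := B) (A.length + 1 + m) false
    have h2 := nest_take_count (A := A) (B := B) (A.length + 1 + m) true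
    have e2 : A.length + 1 + m - A.length - 1 = m := by omega
    rw [e2] at h1 h2
    rw [List.take_of_length_le (show A.length ≤ A.length + 1 + m by omega)] at h1 h2
    have e3 : A.length + 1 + m + 1 = C.length + 2 := by omega
    rw [e3] at h1 h2
    have hq1 := nest_take_count (A := C) (B := D) (C.length + 1) false
    have hq2 := nest_take_count (A := C) (B := D) (C.length + 1) true
    have e4 : C.length + 1 + 1 = C.length + 2 := by omega
    rw [e4] at hq1 hq2
    have h3 := (htake (C.length + 2)).1
    have h4 := (htake (C.length + 2)).2
    have h5 := hB.2 m
    have h6 := ctcf (B.take m)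
    rw [List.length_take] at h6
    have h7 := dyck_len hA
    have h8 := dyck_len hC
    rw [if_neg (show ¬ (A.length + 1 + m ≤ A.length) by omega)] at h1 h2
    have hCt : List.take (C.length + 1) C = C := List.take_of_length_le (by omega)
    rw [if_neg (show ¬ (C.length + 1 ≤ C.length) by omega), hCt] at hq1 hq2
    simp only [show (false = true) = False by simp, show (true = true) = True by simp,
      if_true, if_false] at h1 h2 hq1 hq2
    have hA1 := hA.1
    have hC1 := hC.1
    simp only [ct, cf] at *
    omega
  exact ⟨hAC, hmB, dyck_take_of_bal hB m hbal, dyck_drop_of_take hB m hbal, by omega⟩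

end Aux

namespace Aux2
open Aux

lemma take_app_ge {L R : List Bool} {n : ℕ} (h : L.length ≤ n) :
    (L ++ R).take n = L ++ R.take (n - L.length) := by
  rw [List.take_append, List.take_of_length_le h]

lemma drop_app_ge {L R : List Bool} {n : ℕ} (h : L.length ≤ n) :
    (L ++ R).drop n = R.drop (n - L.length) := by
  rw [List.drop_append, List.drop_eq_nil_of_le h, List.nil_append]

lemma take_app_le {L R : List Bool} {n : ℕ} (h : n ≤ L.length) :
    (L ++ R).take n = L.take n := by
  rw [List.take_append, show n - L.length = 0 by omega]
  simp

lemma drop_app_le {L R : List Bool} {n : ℕ} (h : n ≤ L.length) :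
    (L ++ R).drop n = L.drop n ++ R := by
  rw [List.drop_append, show n - L.length = 0 by omega]
  simp

lemma take_fcons {R : List Bool} {n : ℕ} (h : 1 ≤ n) :
    (false :: R).take n = false :: R.take (n-1) := by
  obtain ⟨k, rfl⟩ : ∃ k, n = k + 1 := ⟨n - 1, by omega⟩
  simp

lemma drop_fcons {R : List Bool} {n : ℕ} (h : 1 ≤ n) :
    (false :: R).drop n = R.drop (n-1) := by
  obtain ⟨k, rfl⟩ : ∃ k, n = k + 1 := ⟨n - 1, by omega⟩
  simp

lemma app_fcons_count (W : List Bool) (T : List Bool) (x : Bool) :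
    (W ++ false :: T).count x = W.count x + T.count x + (if x then 0 else 1) := by
  cases x <;> simp [List.count_append, List.count_cons] <;> omega

lemma dyck_app_fcons_prefix {W T : List Bool} (h : IsDyck (W ++ false :: T)) :
    W.count false + 1 ≤ W.count true := by
  have h1 := h.2 (W.length + 1)
  have e : (W ++ false :: T).take (W.length + 1) = W ++ [false] := by
    rw [take_app_ge (by omega), show W.length + 1 - W.length = 1 by omega]
    rfl
  rw [e] at h1
  simp [List.count_append] at h1
  omega

lemma crossing_absurd {W Y Z2 : List Bool} (hY : IsDyck Y)
    (hB : IsDyck (W ++ false :: (Y ++ Z2)))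
    {m : ℕ} (hm1 : W.length < m) (hm2 : m < W.length + 1 + Y.length)
    (hd1 : IsDyck ((W ++ false :: (Y ++ Z2)).take m))
    (hd2 : IsDyck ((W ++ (Y ++ false :: Z2)).take m)) : False := by
  set t := m - W.length - 1 with ht
  have e1 : (W ++ false :: (Y ++ Z2)).take m = W ++ false :: Y.take t := by
    rw [take_app_ge (by omega), take_fcons (by omega), take_app_le (by omega)]
  have e2 : (W ++ (Y ++ false :: Z2)).take m = W ++ Y.take (t+1) := by
    rw [take_app_ge (by omega), take_app_le (by omega)]
    congr 2
    omega
  rw [e1] at hd1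
  rw [e2] at hd2
  have f1 := hd1.1
  have f2 := hd2.1
  rw [app_fcons_count] at f1
  simp [List.count_append] at f1 f2
  have f3 := dyck_app_fcons_prefix hB
  have f4 := hY.2 t
  have f5 := hY.2 (t+1)
  have f6 := ctcf (Y.take t)
  have f7 := ctcf (Y.take (t+1))
  rw [List.length_take] at f6 f7
  have f8 : min t Y.length = t := by omega
  have f9 : min (t+1) Y.length = t + 1 := by omega
  rw [f8] at f6
  rw [f9] at f7
  have f10 : (Y.take t).count true ≤ (Y.take (t+1)).count true := take_prefix_count Y (by omega) true
  have f11 : (Y.take t).count false ≤ (Y.take (t+1)).count false := take_prefix_count Y (by omega) false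
  omega

lemma back_main {C D : List Bool} (hC : IsDyck C) (hD : IsDyck D) :
    ∀ P, TamariLe P (true :: (C ++ false :: D)) → IsDyck P →
      ∀ A B, IsDyck A → P = true :: (A ++ false :: B) →
        TamariLe (A ++ B.take (C.length - A.length)) C ∧
          TamariLe (B.drop (C.length - A.length)) D := by
  intro P hle
  induction hle using Relation.ReflTransGen.head_induction_on with
  | refl =>
    intro hP A B hA hPeq
    obtain ⟨h1, h2⟩ := dyck_decomp_unique hC hA hPeq
    subst h1 h2
    constructor
    · simp only [Nat.sub_self, List.take_zero, List.append_nil]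
      exact Relation.ReflTransGen.refl
    · simp only [Nat.sub_self, List.drop_zero]
      exact Relation.ReflTransGen.refl
  | head step tail ih =>
    rename_i P P' -- names of the two states
    intro hP A B hA hPeq
    have hP'd : IsDyck P' := step_dyck step hP
    obtain ⟨X, Y, Z, hY, hYne, hPX, hP'X⟩ := step
    have hkey : true :: (A ++ false :: B) = X ++ false :: (Y ++ Z) := by rw [← hPeq, hPX]
    cases X with
    | nil => simp at hkey
    | cons x X0 =>
      have h' := hkey
      simp only [List.cons_append, List.cons.injEq] at h'
      obtain ⟨hx, hkey0⟩ := h'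
      subst hx
      rcases List.append_eq_append_iff.1 hkey0 with ⟨a', ha1, ha2⟩ | ⟨c', hc1, hc2⟩
      · cases a' with
        | nil =>
          -- SEPARATOR case : X0 = A, B = Y ++ Z
          simp only [List.append_nil] at ha1
          simp only [List.nil_append, List.cons.injEq, true_and] at ha2
          rw [ha1] at hP'X
          subst ha2
          have hP'eq : P' = true :: ((A ++ Y) ++ false :: Z) := by
            rw [hP'X]
            simp
          have hAY : IsDyck (A ++ Y) := dyck_append hA hY
          have hP'n : IsDyck (true :: ((A ++ Y) ++ false :: Z)) := by
            rw [← hP'eq]; exact hP'd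
          have tail' : TamariLe (true :: ((A ++ Y) ++ false :: Z)) (true :: (C ++ false :: D)) := by
            rw [← hP'eq]; exact tail
          have spl := split_lemma hAY hC hP'n tail'
          have hYC : A.length + Y.length ≤ C.length := by
            have h5 := spl.1
            simpa using h5
          have ihres := ih hP'd (A ++ Y) Z hAY hP'eq
          have e3 : C.length - (A ++ Y).length = C.length - A.length - Y.length := by
            simp
            omega
          rw [e3] at ihres
          have e1 : (Y ++ Z).take (C.length - A.length)
              = Y ++ Z.take (C.length - A.length - Y.length) := take_app_ge (by omega)
          have e2 : (Y ++ Z).drop (C.length - A.length)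
              = Z.drop (C.length - A.length - Y.length) := drop_app_ge (by omega)
          constructor
          · rw [e1, ← List.append_assoc]
            exact ihres.1
          · rw [e2]
            exact ihres.2
        | cons x t =>
          -- INSIDE-B case
          have h2 := ha2
          simp only [List.cons_append, List.cons.injEq] at h2
          obtain ⟨hx2, hB⟩ := h2
          subst hx2
          set m := C.length - A.length with hmdef
          have hP'eq : P' = true :: (A ++ false :: (t ++ (Y ++ false :: Z))) := by
            rw [hP'X, ha1]
            simp
          have ihres := ih hP'd A (t ++ (Y ++ false :: Z)) hA hP'eq
          have hPn : IsDyck (true :: (A ++ false :: B)) := by rw [← hPeq]; exact hP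
          have hB2 : IsDyck B := nest_tail_dyck hA hPn
          by_cases hm1 : m ≤ t.length
          · have e1 : B.take m = t.take m := by rw [hB]; exact take_app_le hm1
            have e2 : (t ++ (Y ++ false :: Z)).take m = t.take m := take_app_le hm1
            have e3 : B.drop m = t.drop m ++ false :: (Y ++ Z) := by
              rw [hB]; exact drop_app_le hm1
            have e4 : (t ++ (Y ++ false :: Z)).drop m = t.drop m ++ (Y ++ false :: Z) :=
              drop_app_le hm1
            rw [e4] at ihres
            constructor
            · rw [e1, ← e2]
              exact ihres.1
            · rw [e3]
              exact Relation.ReflTransGen.head ⟨t.drop m, Y, Z, hY, hYne, rfl, rfl⟩ ihres.2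
          · by_cases hm2 : t.length + 1 + Y.length ≤ m
            · have e1 : B.take m = t ++ false :: (Y ++ Z.take (m - t.length - 1 - Y.length)) := by
                rw [hB, take_app_ge (by omega), take_fcons (by omega), take_app_ge (by omega)]
              have e2 : (t ++ (Y ++ false :: Z)).take m
                  = t ++ (Y ++ false :: Z.take (m - t.length - 1 - Y.length)) := by
                rw [take_app_ge (by omega), take_app_ge (by omega), take_fcons (by omega),
                  show m - t.length - Y.length - 1 = m - t.length - 1 - Y.length by omega]
              have stepT : TamariStep (B.take m) ((t ++ (Y ++ false :: Z)).take m) := by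
                rw [e1, e2]
                exact ⟨t, Y, Z.take (m - t.length - 1 - Y.length), hY, hYne, rfl, rfl⟩
              have stepA : TamariStep (A ++ B.take m) (A ++ (t ++ (Y ++ false :: Z)).take m) := by
                have h6 := step_context A [] stepT
                rwa [List.append_nil, List.append_nil] at h6
              have e3 : B.drop m = Z.drop (m - t.length - 1 - Y.length) := by
                rw [hB, drop_app_ge (by omega), drop_fcons (by omega), drop_app_ge (by omega)]
              have e4 : (t ++ (Y ++ false :: Z)).drop m = Z.drop (m - t.length - 1 - Y.length) := by
                rw [drop_app_ge (by omega), drop_app_ge (by omega), drop_fcons (by omega),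
                  show m - t.length - Y.length - 1 = m - t.length - 1 - Y.length by omega]
              constructor
              · exact Relation.ReflTransGen.head stepA ihres.1
              · rw [e3, ← e4]
                exact ihres.2
            · exfalso
              have hlePQ' : TamariLe (true :: (A ++ false :: B)) (true :: (C ++ false :: D)) := by
                rw [← hPeq]
                exact Relation.ReflTransGen.head ⟨true :: X0, Y, Z, hY, hYne, hPX, hP'X⟩ tail
              have spl1 := split_lemma hA hC hPn hlePQ'
              have hP'n : IsDyck (true :: (A ++ false :: (t ++ (Y ++ false :: Z)))) := by
                rw [← hP'eq]; exact hP'd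
              have tail' : TamariLe (true :: (A ++ false :: (t ++ (Y ++ false :: Z))))
                  (true :: (C ++ false :: D)) := by
                rw [← hP'eq]; exact tail
              have spl2 := split_lemma hA hC hP'n tail'
              have hd1 : IsDyck (B.take m) := spl1.2.2.1
              have hd2 : IsDyck ((t ++ (Y ++ false :: Z)).take m) := spl2.2.2.1
              rw [hB] at hd1 hB2
              exact crossing_absurd hY hB2 (by omega) (by omega) hd1 hd2
      · -- INSIDE-A region (or separator via this branch)
        cases c' with
        | nil =>
          simp only [List.append_nil] at hc1
          simp only [List.nil_append, List.cons.injEq, true_and] at hc2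
          rw [← hc1] at hP'X
          have ha2 : B = Y ++ Z := hc2.symm
          subst ha2
          have hP'eq : P' = true :: ((A ++ Y) ++ false :: Z) := by
            rw [hP'X]
            simp
          have hAY : IsDyck (A ++ Y) := dyck_append hA hY
          have hP'n : IsDyck (true :: ((A ++ Y) ++ false :: Z)) := by
            rw [← hP'eq]; exact hP'd
          have tail' : TamariLe (true :: ((A ++ Y) ++ false :: Z)) (true :: (C ++ false :: D)) := by
            rw [← hP'eq]; exact tail
          have spl := split_lemma hAY hC hP'n tail'
          have hYC : A.length + Y.length ≤ C.length := by
            have h5 := spl.1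
            simpa using h5
          have ihres := ih hP'd (A ++ Y) Z hAY hP'eq
          have e3 : C.length - (A ++ Y).length = C.length - A.length - Y.length := by
            simp
            omega
          rw [e3] at ihres
          have e1 : (Y ++ Z).take (C.length - A.length)
              = Y ++ Z.take (C.length - A.length - Y.length) := take_app_ge (by omega)
          have e2 : (Y ++ Z).drop (C.length - A.length)
              = Z.drop (C.length - A.length - Y.length) := drop_app_ge (by omega)
          constructor
          · rw [e1, ← List.append_assoc]
            exact ihres.1
          · rw [e2]
            exact ihres.2
        | cons x t =>
          have h2 := hc2
          simp only [List.cons_append, List.cons.injEq] at h2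
          obtain ⟨hx2, hYZ⟩ := h2
          subst hx2
          have hc1' : A = X0 ++ false :: t := hc1
          rcases List.append_eq_append_iff.1 hYZ with ⟨a2, ht2, hZ2⟩ | ⟨c2, hY2, hZc⟩
          · -- block inside A
            have stepA : TamariStep A (X0 ++ (Y ++ false :: a2)) :=
              ⟨X0, Y, a2, hY, hYne, by rw [hc1', ht2], rfl⟩
            have hA' : IsDyck (X0 ++ (Y ++ false :: a2)) := step_dyck stepA hA
            have hP'eq : P' = true :: ((X0 ++ (Y ++ false :: a2)) ++ false :: B) := by
              rw [hP'X, hZ2]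
              simp
            have ihres := ih hP'd _ B hA' hP'eq
            have hlen' : (X0 ++ (Y ++ false :: a2)).length = A.length :=
              ((step_counts stepA).1).symm
            rw [hlen'] at ihres
            constructor
            · refine Relation.ReflTransGen.head ?_ ihres.1
              have h6 := step_context [] (B.take (C.length - A.length)) stepA
              simpa using h6
            · exact ihres.2
          · cases c2 with
            | nil =>
              simp only [List.append_nil] at hY2
              simp only [List.nil_append] at hZc
              have ht2 : t = Y ++ ([] : List Bool) := by simp [hY2]
              have hZ2 : Z = ([] : List Bool) ++ false :: B := by simp [hZc.symm]
              set a2 : List Bool := [] with ha2def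
              have stepA : TamariStep A (X0 ++ (Y ++ false :: a2)) :=
                ⟨X0, Y, a2, hY, hYne, by rw [hc1', ht2], rfl⟩
              have hA' : IsDyck (X0 ++ (Y ++ false :: a2)) := step_dyck stepA hA
              have hP'eq : P' = true :: ((X0 ++ (Y ++ false :: a2)) ++ false :: B) := by
                rw [hP'X, hZ2]
                simp
              have ihres := ih hP'd _ B hA' hP'eq
              have hlen' : (X0 ++ (Y ++ false :: a2)).length = A.length :=
                ((step_counts stepA).1).symm
              rw [hlen'] at ihres
              constructor
              · refine Relation.ReflTransGen.head ?_ ihres.1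
                have h6 := step_context [] (B.take (C.length - A.length)) stepA
                simpa using h6
              · exact ihres.2
            | cons x2 c2' =>
              exfalso
              have h3 := hZc
              simp only [List.cons_append, List.cons.injEq] at h3
              obtain ⟨hx3, hBZ⟩ := h3
              subst hx3
              have g1 : t.count false + 1 ≤ t.count true := by
                have hYd : IsDyck (t ++ false :: c2') := by rw [← hY2]; exact hY
                exact dyck_app_fcons_prefix hYd
              have g2 : X0.count false + 1 ≤ X0.count true := by
                have hAd : IsDyck (X0 ++ false :: t) := by rw [← hc1]; exact hA
                exact dyck_app_fcons_prefix hAd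
              have g3 := hA.1
              rw [hc1] at g3
              rw [app_fcons_count, app_fcons_count] at g3
              simp at g3
              omega

end Aux2


namespace Aux3
open Aux Aux2

lemma tamari_le_nest1 {L R P2 : List Bool} (hR : IsDyck R) :
    TamariLe (true :: (L ++ false :: (R ++ P2))) (true :: ((L ++ R) ++ false :: P2)) := by
  cases R with
  | nil =>
    rw [List.append_nil, List.nil_append]
    exact Relation.ReflTransGen.refl
  | cons r R0 =>
    exact Relation.ReflTransGen.single ⟨true :: L, r :: R0, P2, hR, by simp, by simp, by simp⟩

lemma tamari_le_nest2 {P1 Q1 W : List Bool} (h : TamariLe P1 Q1) :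
    TamariLe (true :: (P1 ++ false :: W)) (true :: (Q1 ++ false :: W)) := by
  have h1 := le_context [true] (false :: W) h
  simpa [List.append_assoc] using h1

lemma tamari_le_nest3 {Q1 P2 Q2 : List Bool} (h : TamariLe P2 Q2) :
    TamariLe (true :: (Q1 ++ false :: P2)) (true :: (Q1 ++ false :: Q2)) := by
  have h1 := le_context (true :: Q1 ++ [false]) [] h
  simpa [List.append_assoc] using h1

end Aux3

/-- The composition map is a bijection from pairs (properly pointed synchronized interval,
synchronized interval) onto nonempty synchronized intervals. -/
theorem sync_compose_bijective :
    (∀ x, PPSI x → Sync (glueP x) (glueQ x) ∧ glueP x ≠ []) ∧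
      (∀ P Q : List Bool, Sync P Q → P ≠ [] →
        ∃! x, PPSI x ∧ glueP x = P ∧ glueQ x = Q) := by
  constructor
  · rintro ⟨⟨L, R, Q1⟩, P2, Q2⟩ ⟨hL, hR, hLR, hS1, hS2⟩
    obtain ⟨hP1d, hQ1d, hlen1, hle1, htw1⟩ := hS1
    obtain ⟨hP2d, hQ2d, hlen2, hle2, htw2⟩ := hS2
    replace hL : IsDyck L := hL
    replace hR : IsDyck R := hR
    replace hLR : L = [] → R = [] := hLR
    replace hP1d : IsDyck (L ++ R) := hP1d
    replace hQ1d : IsDyck Q1 := hQ1d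
    replace hlen1 : (L ++ R).length = Q1.length := hlen1
    replace hle1 : TamariLe (L ++ R) Q1 := hle1
    replace htw1 : typeWord (L ++ R) = typeWord Q1 := htw1
    replace hP2d : IsDyck P2 := hP2d
    replace hQ2d : IsDyck Q2 := hQ2d
    replace hlen2 : P2.length = Q2.length := hlen2
    replace hle2 : TamariLe P2 Q2 := hle2
    replace htw2 : typeWord P2 = typeWord Q2 := htw2
    have hdP : IsDyck (glueP ((L, R, Q1), (P2, Q2))) :=
      Aux.dyck_nest hL (Aux.dyck_append hR hP2d)
    have hdQ : IsDyck (glueQ ((L, R, Q1), (P2, Q2))) := Aux.dyck_nest hQ1d hQ2d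
    have hlen1' : L.length + R.length = Q1.length := by
      simpa using hlen1
    have hlen : (glueP ((L, R, Q1), (P2, Q2))).length = (glueQ ((L, R, Q1), (P2, Q2))).length := by
      simp [glueP, glueQ]
      omega
    refine ⟨⟨hdP, hdQ, hlen, ?_, ?_⟩, by simp [glueP]⟩
    · exact (Aux3.tamari_le_nest1 hR).trans ((Aux3.tamari_le_nest2 hle1).trans
        (Aux3.tamari_le_nest3 hle2))
    · apply (Aux.typeWord_iff_fullType hdP hdQ hlen).2
      show Aux.fullType (true :: (L ++ false :: (R ++ P2)))
        = Aux.fullType (true :: (Q1 ++ false :: Q2))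
      rw [Aux.fullType_cons_true, Aux.fullType_cons_true]
      have hft1 : Aux.fullType (L ++ false :: (R ++ P2))
          = Aux.fullType (L ++ R) ++ Aux.fullType P2 := by
        rw [Aux.fullType_append hL (Y := false :: (R ++ P2)), Aux.fullType_cons_false,
          Aux.fullType_append hR]
        rw [Aux.fullType_append hL (Y := R), List.append_assoc]
      have hft2 : Aux.fullType (Q1 ++ false :: Q2)
          = Aux.fullType Q1 ++ Aux.fullType Q2 := by
        rw [Aux.fullType_append hQ1d (Y := false :: Q2), Aux.fullType_cons_false]
      have hfteq : Aux.fullType (L ++ R) = Aux.fullType Q1 :=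
        (Aux.typeWord_iff_fullType hP1d hQ1d hlen1).1 htw1
      have hftP2 : Aux.fullType P2 = Aux.fullType Q2 :=
        (Aux.typeWord_iff_fullType hP2d hQ2d hlen2).1 htw2
      have hhead : (L ++ false :: (R ++ P2)).getD 0 false = (Q1 ++ false :: Q2).getD 0 false := by
        cases L with
        | nil =>
          have hR0 : R = [] := hLR rfl
          have hQ10 : Q1 = [] := by
            have h9 : Q1.length = 0 := by rw [← hlen1]; simp [hR0]
            exact List.length_eq_zero_iff.mp h9
          simp [hQ10]
        | cons l0 L0 =>
          have hQ1ne : Q1 ≠ [] := by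
            intro h0
            rw [h0] at hlen1
            simp at hlen1
          obtain ⟨tq, htq⟩ := Aux.dyck_head hQ1d hQ1ne
          have hl0 : l0 = true := by
            have h9 : List.getD (l0 :: L0) 0 false = true := Aux.dyck_getD0 hL (by simp)
            simpa using h9
          subst hl0
          rw [htq]
          rfl
      rw [hhead, hft1, hft2, hfteq, hftP2]
  · rintro P Q ⟨hPd, hQd, hlen, hle, htw⟩ hPne
    have hQne : Q ≠ [] := by
      intro h0
      rw [h0] at hlen
      simp at hlen
      exact hPne hlen
    obtain ⟨A, B, hA, hBfull, hPeq⟩ := Aux.dyck_decomp hPd hPne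
    obtain ⟨C, D, hC, hD, hQeq⟩ := Aux.dyck_decomp hQd hQne
    subst hPeq
    subst hQeq
    set m := C.length - A.length with hmdef
    obtain ⟨hAC, hmB, hB1d, hB2d, hBD⟩ := Aux.split_lemma hA hC hPd hle
    have hback := Aux2.back_main hC hD _ hle hPd A B hA rfl
    rw [← hmdef] at hmB hB1d hB2d hBD hback
    have hft : Aux.fullType (true :: (A ++ false :: B))
        = Aux.fullType (true :: (C ++ false :: D)) :=
      (Aux.typeWord_iff_fullType hPd hQd hlen).1 htw
    rw [Aux.fullType_cons_true, Aux.fullType_cons_true] at hft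
    have hexp1 : Aux.fullType (A ++ false :: B)
        = (Aux.fullType A ++ Aux.fullType (B.take m)) ++ Aux.fullType (B.drop m) := by
      rw [Aux.fullType_append hA (Y := false :: B), Aux.fullType_cons_false]
      conv_lhs => rw [← List.take_append_drop m B]
      rw [Aux.fullType_append hB1d]
      rw [List.append_assoc]
    have hexp2 : Aux.fullType (C ++ false :: D) = Aux.fullType C ++ Aux.fullType D := by
      rw [Aux.fullType_append hC (Y := false :: D), Aux.fullType_cons_false]
    rw [hexp1, hexp2] at hft
    have hhead : (A ++ false :: B).getD 0 false = (C ++ false :: D).getD 0 false := by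
      have h9 := hft
      simp only [List.cons.injEq] at h9
      exact h9.1
    have htail : (Aux.fullType A ++ Aux.fullType (B.take m)) ++ Aux.fullType (B.drop m)
        = Aux.fullType C ++ Aux.fullType D := by
      have h9 := hft
      simp only [List.cons.injEq] at h9
      exact h9.2
    have hlenB1 : (B.take m).length = m := by
      rw [List.length_take]
      omega
    have hlft : (Aux.fullType A ++ Aux.fullType (B.take m)).length = (Aux.fullType C).length := by
      simp only [List.length_append, Aux.length_fullType]
      have g1 := Aux.dyck_len hA
      have g2 := Aux.dyck_len hB1d
      have g3 := Aux.dyck_len hC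
      rw [hlenB1] at g2
      simp only [Aux.ct] at g1 g2 g3 ⊢
      omega
    obtain ⟨hsp1, hsp2⟩ := List.append_inj htail hlft
    have hft1 : Aux.fullType (A ++ B.take m) = Aux.fullType C := by
      rw [Aux.fullType_append hA]
      exact hsp1
    have hlenAB1 : (A ++ B.take m).length = C.length := by
      simp only [List.length_append, hlenB1]
      omega
    have hlenB2 : (B.drop m).length = D.length := by
      rw [List.length_drop]
      omega
    have htw1 : typeWord (A ++ B.take m) = typeWord C :=
      (Aux.typeWord_iff_fullType (Aux.dyck_append hA hB1d) hC hlenAB1).2 hft1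
    have htw2 : typeWord (B.drop m) = typeWord D :=
      (Aux.typeWord_iff_fullType hB2d hD hlenB2).2 hsp2
    have hcond : A = [] → B.take m = [] := by
      intro hA0
      have hC0 : C = [] := by
        by_contra hC0
        obtain ⟨tc, htc⟩ := Aux.dyck_head hC hC0
        rw [hA0, htc] at hhead
        simp at hhead
      have h9 : m = 0 := by rw [hmdef, hC0]; simp
      rw [h9]
      rfl
    refine ⟨((A, B.take m, C), (B.drop m, D)),
      ⟨⟨hA, hB1d, hcond,
        ⟨Aux.dyck_append hA hB1d, hC, hlenAB1, hback.1, htw1⟩,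
        ⟨hB2d, hD, hlenB2, hback.2, htw2⟩⟩, ?_, ?_⟩, ?_⟩
    · show true :: (A ++ false :: (B.take m ++ B.drop m)) = true :: (A ++ false :: B)
      rw [List.take_append_drop]
    · rfl
    · rintro ⟨⟨a, b, c⟩, p, q⟩ ⟨⟨ha, hb, hcnd, hs1, hs2⟩, hgp, hgq⟩
      replace ha : IsDyck a := ha
      have hcd : IsDyck c := hs1.2.1
      have hgp' : true :: (a ++ false :: (b ++ p)) = true :: (A ++ false :: B) := hgp
      have hgq' : true :: (c ++ false :: q) = true :: (C ++ false :: D) := hgq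
      obtain ⟨h1, h2⟩ := Aux.dyck_decomp_unique ha hA hgp'
      obtain ⟨h3, h4⟩ := Aux.dyck_decomp_unique hcd hC hgq'
      have hblen : b.length = m := by
        have h5 : (a ++ b).length = c.length := hs1.2.2.1
        simp only [List.length_append] at h5
        rw [h1, h3] at h5
        omega
      have hbeq : b = B.take m := by
        rw [← h2, ← hblen, List.take_left]
      have hpeq : p = B.drop m := by
        rw [← h2, ← hblen, List.drop_left]
      simp only [Prod.mk.injEq]
      exact ⟨⟨h1, hbeq, h3⟩, hpeq, h4⟩
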